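/- Let ℓ ∈ ℝ^r be a generic length vector with nonnegative weakly increasing components. If there is an ℓ-long subset J ⊆ {1,...,r} of size #J = μ(ℓ), then ℓ is equivalent to the length vector (0,...,0,1,...,1) with exactly 2μ(ℓ)−1 entries equal to 1, i.e., a subset of {1,...,r} is ℓ-long if and only if it contains at least μ(ℓ) elements from {r−2μ(ℓ)+2,...,r}. -/

import Mathlib

open Finset

/-- `J` is `ℓ`-long if the sum of `ℓ` over `J` exceeds the sum over its complement. -/
def IsLong {r : ℕ} (ℓ : Fin r → ℝ) (J : Finset (Fin r)) : Prop :=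
  ∑ j ∈ Jᶜ, ℓ j < ∑ j ∈ J, ℓ j

/-- `ℓ` is generic if no subset sum equals the complementary sum. -/
def IsGeneric {r : ℕ} (ℓ : Fin r → ℝ) : Prop :=
  ∀ J : Finset (Fin r), ∑ j ∈ J, ℓ j ≠ ∑ j ∈ Jᶜ, ℓ j

open scoped Classical in
/-- `σ_ℓ(J)`: the number of `j ∈ J` such that `J \ {j}` is `ℓ`-short. -/
noncomputable def sigmaL {r : ℕ} (ℓ : Fin r → ℝ) (J : Finset (Fin r)) : ℕ :=
  (J.filter (fun j => ¬ IsLong ℓ (J.erase j))).card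

/-- `μ(ℓ) = min { σ_ℓ(J) : J ℓ-long, σ_ℓ(J) > 0 }`. -/
noncomputable def muL {r : ℕ} (ℓ : Fin r → ℝ) : ℕ :=
  sInf {n : ℕ | 0 < n ∧ ∃ J : Finset (Fin r), IsLong ℓ J ∧ sigmaL ℓ J = n}

private lemma long_compl_iff {r : ℕ} {ℓ : Fin r → ℝ} (hg : IsGeneric ℓ) (J : Finset (Fin r)) :
    IsLong ℓ Jᶜ ↔ ¬ IsLong ℓ J := by
  simp only [IsLong, compl_compl]
  constructor
  · intro h hJ
    exact absurd (h.trans hJ) (lt_irrefl _)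
  · intro h
    exact lt_of_le_of_ne (not_lt.mp h) (hg J)

private lemma long_mono {r : ℕ} {ℓ : Fin r → ℝ} (hpos : ∀ j, 0 ≤ ℓ j)
    {A B : Finset (Fin r)} (hAB : A ⊆ B) (hA : IsLong ℓ A) : IsLong ℓ B := by
  have h1 : ∑ j ∈ A, ℓ j ≤ ∑ j ∈ B, ℓ j :=
    sum_le_sum_of_subset_of_nonneg hAB (fun i _ _ => hpos i)
  have h2 : ∑ j ∈ Bᶜ, ℓ j ≤ ∑ j ∈ Aᶜ, ℓ j :=
    sum_le_sum_of_subset_of_nonneg (compl_subset_compl.mpr hAB) (fun i _ _ => hpos i)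
  unfold IsLong at hA ⊢
  linarith

private lemma not_long_empty {r : ℕ} {ℓ : Fin r → ℝ} (hpos : ∀ j, 0 ≤ ℓ j) :
    ¬ IsLong ℓ (∅ : Finset (Fin r)) := by
  intro h
  unfold IsLong at h
  rw [sum_empty] at h
  exact absurd h (not_lt.mpr (sum_nonneg fun i _ => hpos i))

private lemma mu_le_card_aux {r : ℕ} {ℓ : Fin r → ℝ} (hpos : ∀ j, 0 ≤ ℓ j) :
    ∀ (n : ℕ) (J : Finset (Fin r)), J.card = n → IsLong ℓ J → muL ℓ ≤ n := by
  classical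
  intro n
  induction n using Nat.strong_induction_on with
  | _ n ih =>
    intro J hcard hJ
    by_cases h : ∃ j ∈ J, IsLong ℓ (J.erase j)
    · obtain ⟨j, hjJ, hj⟩ := h
      have hc : (J.erase j).card = n - 1 := by rw [card_erase_of_mem hjJ, hcard]
      have hn : 0 < n := hcard ▸ card_pos.mpr ⟨j, hjJ⟩
      exact (ih (n - 1) (by omega) (J.erase j) hc hj).trans (by omega)
    · push_neg at h
      have hne : J.Nonempty := by
        rcases J.eq_empty_or_nonempty with he | hne
        · exact absurd (he ▸ hJ) (not_long_empty hpos)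
        · exact hne
      have hσ : sigmaL ℓ J = J.card := by
        unfold sigmaL
        rw [filter_true_of_mem (fun j hj => h j hj)]
      have hle : muL ℓ ≤ sigmaL ℓ J :=
        Nat.sInf_le ⟨by rw [hσ]; exact card_pos.mpr hne, J, hJ, rfl⟩
      rw [hσ, hcard] at hle
      exact hle

private lemma mu_le_card {r : ℕ} {ℓ : Fin r → ℝ} (hpos : ∀ j, 0 ≤ ℓ j)
    {J : Finset (Fin r)} (hJ : IsLong ℓ J) : muL ℓ ≤ J.card :=
  mu_le_card_aux hpos J.card J rfl hJ

private lemma Tm_card {r m : ℕ} (hm1 : 1 ≤ m) (hmr : m ≤ r) :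
    (univ.filter fun j : Fin r => r ≤ (j : ℕ) + m).card = m := by
  have hpiv : r - m < r := by omega
  have he : (univ.filter fun j : Fin r => r ≤ (j : ℕ) + m) = Ici (⟨r - m, hpiv⟩ : Fin r) := by
    ext x
    simp only [mem_filter, mem_univ, true_and, mem_Ici, Fin.le_def]
    omega
  rw [he, Fin.card_Ici]
  simp only [Fin.val_mk]
  omega

private lemma top_long {r : ℕ} {ℓ : Fin r → ℝ} (hpos : ∀ j, 0 ≤ ℓ j) (hmono : Monotone ℓ)
    {J₀ : Finset (Fin r)} (hJ₀ : IsLong ℓ J₀) {m : ℕ} (hm : J₀.card = m) (hm1 : 1 ≤ m) :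
    IsLong ℓ (univ.filter fun j : Fin r => r ≤ (j : ℕ) + m) := by
  classical
  set Tm := univ.filter fun j : Fin r => r ≤ (j : ℕ) + m with hTm
  have hmr : m ≤ r := by
    have h := card_le_univ J₀
    rwa [hm, Fintype.card_fin] at h
  have hTmc : Tm.card = m := Tm_card hm1 hmr
  have hpiv : r - m < r := by omega
  set p : Fin r := ⟨r - m, hpiv⟩ with hp
  have hsplitJ : ∑ j ∈ J₀.filter (· ∈ Tm), ℓ j + ∑ j ∈ J₀.filter (· ∉ Tm), ℓ j
      = ∑ j ∈ J₀, ℓ j := sum_filter_add_sum_filter_not _ _ _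
  have hsplitT : ∑ j ∈ Tm.filter (· ∈ J₀), ℓ j + ∑ j ∈ Tm.filter (· ∉ J₀), ℓ j
      = ∑ j ∈ Tm, ℓ j := sum_filter_add_sum_filter_not _ _ _
  have hswap : J₀.filter (· ∈ Tm) = Tm.filter (· ∈ J₀) := by
    ext x
    simp only [mem_filter]
    tauto
  have hcardsJ : #(J₀.filter (fun x => x ∈ Tm)) + #(J₀.filter (fun x => x ∉ Tm)) = #J₀ := by
    simpa using card_filter_add_card_filter_not (s := J₀) (p := (· ∈ Tm))
  have hcardsT : #(Tm.filter (fun x => x ∈ J₀)) + #(Tm.filter (fun x => x ∉ J₀)) = #Tm := by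
    simpa using card_filter_add_card_filter_not (s := Tm) (p := (· ∈ J₀))
  have hcardeq : (J₀.filter (· ∉ Tm)).card = (Tm.filter (· ∉ J₀)).card := by
    have h0 : (J₀.filter (· ∈ Tm)).card = (Tm.filter (· ∈ J₀)).card := by rw [hswap]
    omega
  have hub : ∀ j ∈ J₀.filter (· ∉ Tm), ℓ j ≤ ℓ p := by
    intro j hj
    have h1 : j ∉ Tm := (mem_filter.mp hj).2
    have h2 : ¬ (r ≤ (j : ℕ) + m) := by
      intro hc
      exact h1 (mem_filter.mpr ⟨mem_univ _, hc⟩)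
    exact hmono (by rw [Fin.le_def]; simp only [hp, Fin.val_mk]; omega)
  have hlb : ∀ j ∈ Tm.filter (· ∉ J₀), ℓ p ≤ ℓ j := by
    intro j hj
    have h1 : j ∈ Tm := (mem_filter.mp hj).1
    have h2 : r ≤ (j : ℕ) + m := (mem_filter.mp h1).2
    exact hmono (by rw [Fin.le_def]; simp only [hp, Fin.val_mk]; omega)
  have h1 := sum_le_card_nsmul _ _ _ hub
  have h2 := card_nsmul_le_sum _ _ _ hlb
  rw [hcardeq] at h1
  rw [nsmul_eq_mul] at h1 h2
  have hsum : ∑ j ∈ J₀, ℓ j ≤ ∑ j ∈ Tm, ℓ j := by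
    have h3 : ∑ j ∈ J₀.filter (· ∈ Tm), ℓ j = ∑ j ∈ Tm.filter (· ∈ J₀), ℓ j := by rw [hswap]
    linarith
  have hcJ := sum_compl_add_sum J₀ ℓ
  have hcT := sum_compl_add_sum Tm ℓ
  unfold IsLong at hJ₀ ⊢
  linarith

private lemma subsetT_long {r : ℕ} {ℓ : Fin r → ℝ} (hg : IsGeneric ℓ) (hpos : ∀ j, 0 ≤ ℓ j)
    (hmono : Monotone ℓ) (hJ : ∃ J : Finset (Fin r), IsLong ℓ J ∧ J.card = muL ℓ) :
    ∀ S : Finset (Fin r), (∀ j ∈ S, r + 1 ≤ (j : ℕ) + 2 * muL ℓ) → S.card = muL ℓ →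
      IsLong ℓ S := by
  classical
  obtain ⟨J₀, hJ₀l, hJ₀c⟩ := hJ
  set m := muL ℓ with hmdef
  have hm1 : 1 ≤ m := by
    by_contra h
    have h0 : m = 0 := by omega
    rw [h0, card_eq_zero] at hJ₀c
    exact not_long_empty hpos (hJ₀c ▸ hJ₀l)
  have hmr : m ≤ r := by
    have h := card_le_univ J₀
    rwa [hJ₀c, Fintype.card_fin] at h
  have hTmlong := top_long hpos hmono hJ₀l hJ₀c hm1
  set Tm := univ.filter fun j : Fin r => r ≤ (j : ℕ) + m with hTm
  have hTmc : Tm.card = m := Tm_card hm1 hmr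
  by_contra hcon
  push_neg at hcon
  obtain ⟨S₀, hS₀T, hS₀c, hS₀s⟩ := hcon
  set 𝒮 : Finset (Finset (Fin r)) := univ.filter
    (fun S => (∀ j ∈ S, r + 1 ≤ (j : ℕ) + 2 * m) ∧ S.card = m ∧ ¬ IsLong ℓ S) with h𝒮
  have hmem𝒮 : ∀ S : Finset (Fin r), S ∈ 𝒮 ↔
      (∀ j ∈ S, r + 1 ≤ (j : ℕ) + 2 * m) ∧ S.card = m ∧ ¬ IsLong ℓ S := by
    intro S
    rw [h𝒮, mem_filter]
    simp only [mem_univ, true_and]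
  have h𝒮ne : 𝒮.Nonempty := ⟨S₀, (hmem𝒮 S₀).mpr ⟨hS₀T, hS₀c, hS₀s⟩⟩
  obtain ⟨S₁, hS₁, hS₁max⟩ := exists_max_image 𝒮 (fun S => ∑ j ∈ S, ℓ j) h𝒮ne
  set 𝒮₂ := 𝒮.filter (fun S => ∑ j ∈ S₁, ℓ j ≤ ∑ j ∈ S, ℓ j) with h𝒮₂
  have h2ne : 𝒮₂.Nonempty := ⟨S₁, mem_filter.mpr ⟨hS₁, le_refl _⟩⟩
  obtain ⟨S, hS2, hSmax2⟩ := exists_max_image 𝒮₂ (fun S => ∑ j ∈ S, (j : ℕ)) h2ne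
  have hSmem : S ∈ 𝒮 := (mem_filter.mp hS2).1
  have hfS : ∑ j ∈ S₁, ℓ j ≤ ∑ j ∈ S, ℓ j := (mem_filter.mp hS2).2
  obtain ⟨hST, hScard, hSshort⟩ := (hmem𝒮 S).mp hSmem
  have hmaxf : ∀ B ∈ 𝒮, ∑ j ∈ B, ℓ j ≤ ∑ j ∈ S, ℓ j := fun B hB => (hS₁max B hB).trans hfS
  have hmaxg : ∀ B ∈ 𝒮, ∑ j ∈ S, ℓ j ≤ ∑ j ∈ B, ℓ j → ∑ j ∈ B, (j : ℕ) ≤ ∑ j ∈ S, (j : ℕ) := by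
    intro B hB hle
    exact hSmax2 B (mem_filter.mpr ⟨hB, hfS.trans hle⟩)
  have hSne : S.Nonempty := card_pos.mp (by rw [hScard]; omega)
  set a := S.min' hSne with ha
  have haS : a ∈ S := min'_mem _ _
  -- find j₀ ∈ Tm \ S with a < j₀
  have hnotsub : ¬ Tm ⊆ S := by
    intro hsub
    have he : Tm = S := eq_of_subset_of_card_le hsub (by rw [hScard, hTmc])
    exact hSshort (he ▸ hTmlong)
  obtain ⟨j₁, hj₁Tm, hj₁S⟩ := not_subset.mp hnotsub
  have hj0 : ∃ j₀, (j₀ ∈ Tm ∧ j₀ ∉ S) ∧ a < j₀ := by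
    refine ⟨j₁, ⟨hj₁Tm, hj₁S⟩, ?_⟩
    by_contra hle
    push_neg at hle
    have hj₁v : r ≤ (j₁ : ℕ) + m := (mem_filter.mp hj₁Tm).2
    have hsub : S ⊆ Tm := by
      intro x hx
      have hax : a ≤ x := min'_le S x hx
      have hjx : (j₁ : ℕ) ≤ (x : ℕ) := Fin.le_def.mp (hle.trans hax)
      exact mem_filter.mpr ⟨mem_univ _, by omega⟩
    have he : S = Tm := eq_of_subset_of_card_le hsub (by rw [hScard, hTmc])
    exact hSshort (he ▸ hTmlong)
  obtain ⟨j₀, ⟨hj₀Tm, hj₀S⟩, haj₀⟩ := hj0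
  have hj₀T : r + 1 ≤ (j₀ : ℕ) + 2 * m := by
    have : r ≤ (j₀ : ℕ) + m := (mem_filter.mp hj₀Tm).2
    omega
  set S' := S.erase a with hS'
  have hS'c : S'.card = m - 1 := by rw [hS', card_erase_of_mem haS, hScard]
  have hj₀S' : j₀ ∉ S' := fun h => hj₀S (erase_subset _ _ h)
  set B := insert j₀ S' with hB
  have hBc : B.card = m := by
    rw [hB, card_insert_of_notMem hj₀S', hS'c]
    omega
  have hBT : ∀ j ∈ B, r + 1 ≤ (j : ℕ) + 2 * m := by
    intro j hj
    rcases mem_insert.mp hj with h | h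
    · exact h ▸ hj₀T
    · exact hST j (erase_subset _ _ h)
  have hsum_erase : ∑ j ∈ S', ℓ j + ℓ a = ∑ j ∈ S, ℓ j := sum_erase_add S ℓ haS
  have hsumB : ∑ j ∈ B, ℓ j = ℓ j₀ + ∑ j ∈ S', ℓ j := sum_insert hj₀S'
  have hidx_erase : ∑ j ∈ S', (j : ℕ) + (a : ℕ) = ∑ j ∈ S, (j : ℕ) :=
    sum_erase_add S (fun j => (j : ℕ)) haS
  have hidxB : ∑ j ∈ B, (j : ℕ) = (j₀ : ℕ) + ∑ j ∈ S', (j : ℕ) := sum_insert hj₀S'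
  have hla : ℓ a ≤ ℓ j₀ := hmono haj₀.le
  have hBlong : IsLong ℓ B := by
    by_contra hBs
    have hBmem : B ∈ 𝒮 := (hmem𝒮 B).mpr ⟨hBT, hBc, hBs⟩
    have h1 : ∑ j ∈ S, ℓ j ≤ ∑ j ∈ B, ℓ j := by rw [hsumB]; linarith
    have h2 := hmaxg B hBmem h1
    rw [hidxB] at h2
    have h3 : (a : ℕ) < (j₀ : ℕ) := Fin.lt_def.mp haj₀
    omega
  have hS'short : ¬ IsLong ℓ S' := by
    intro h
    have := mu_le_card hpos h
    rw [hS'c] at this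
    omega
  set V := S'ᶜ with hV
  have hVlong : IsLong ℓ V := (long_compl_iff hg S').mpr hS'short
  have hpred : ∀ j, j ∉ S' → (¬ IsLong ℓ (V.erase j) ↔ IsLong ℓ (insert j S')) := by
    intro j hj
    have he : V.erase j = (insert j S')ᶜ := by rw [hV, compl_insert]
    rw [he, long_compl_iff hg, not_not]
  have hj₀V : j₀ ∈ V := mem_compl.mpr hj₀S'
  have hσpos : 0 < sigmaL ℓ V := by
    unfold sigmaL
    rw [card_pos]
    exact ⟨j₀, mem_filter.mpr ⟨hj₀V, (hpred j₀ hj₀S').mpr hBlong⟩⟩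
  have hSshort' : ¬ (∑ x ∈ Sᶜ, ℓ x < ∑ x ∈ S, ℓ x) := hSshort
  have hsub2 : ∀ (inst : DecidablePred fun j => ¬ IsLong ℓ (V.erase j)),
      (V.filter (fun j => ¬ IsLong ℓ (V.erase j))) ⊆ (Ioi a) \ S' := by
    intro inst j hj
    obtain ⟨hjV, hjP⟩ := mem_filter.mp hj
    have hjS' : j ∉ S' := mem_compl.mp hjV
    have hlong : IsLong ℓ (insert j S') := (hpred j hjS').mp hjP
    have hlalt : ℓ a < ℓ j := by
      have h1 : ∑ x ∈ (insert j S')ᶜ, ℓ x < ∑ x ∈ insert j S', ℓ x := hlong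
      have e1 := sum_compl_add_sum (insert j S') ℓ
      have e2 := sum_compl_add_sum S ℓ
      have e3 : ∑ x ∈ insert j S', ℓ x = ℓ j + ∑ x ∈ S', ℓ x := sum_insert hjS'
      have h2 : ∑ x ∈ S, ℓ x ≤ ∑ x ∈ Sᶜ, ℓ x := not_lt.mp hSshort'
      linarith
    have haj : a < j := by
      by_contra h
      exact absurd (hmono (not_lt.mp h)) (not_le.mpr hlalt)
    exact mem_sdiff.mpr ⟨mem_Ioi.mpr haj, hjS'⟩
  have hS'Ioi : S' ⊆ Ioi a := by
    intro x hx
    rw [mem_Ioi]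
    exact lt_of_le_of_ne (min'_le S x (erase_subset _ _ hx)) (Ne.symm (ne_of_mem_erase hx))
  have hσub : sigmaL ℓ V ≤ m - 1 := by
    have h1 : sigmaL ℓ V ≤ ((Ioi a) \ S').card := by
      unfold sigmaL
      exact card_le_card (hsub2 _)
    have h2 : ((Ioi a) \ S').card = (Ioi a).card - S'.card := card_sdiff_of_subset hS'Ioi
    have h3 : (Ioi a).card = r - 1 - (a : ℕ) := Fin.card_Ioi a
    have haT : r + 1 ≤ (a : ℕ) + 2 * m := hST a haS
    have har : (a : ℕ) < r := a.isLt
    omega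
  have hfin : muL ℓ ≤ sigmaL ℓ V := Nat.sInf_le ⟨hσpos, V, hVlong, rfl⟩
  rw [← hmdef] at hfin
  omega

theorem equiv_of_long_card_eq_mu {r : ℕ} (ℓ : Fin r → ℝ) (hg : IsGeneric ℓ)
    (hpos : ∀ j, 0 ≤ ℓ j) (hmono : Monotone ℓ)
    (hJ : ∃ J : Finset (Fin r), IsLong ℓ J ∧ J.card = muL ℓ) :
    ∀ J : Finset (Fin r), IsLong ℓ J ↔
      muL ℓ ≤ (J.filter (fun j : Fin r => r + 1 ≤ (j : ℕ) + 2 * muL ℓ)).card := by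
  classical
  have hkey := subsetT_long hg hpos hmono hJ
  obtain ⟨J₀, hJ₀l, hJ₀c⟩ := hJ
  set m := muL ℓ with hmdef
  have hm1 : 1 ≤ m := by
    by_contra h
    have h0 : m = 0 := by omega
    rw [h0, card_eq_zero] at hJ₀c
    exact not_long_empty hpos (hJ₀c ▸ hJ₀l)
  have hmr : m ≤ r := by
    have h := card_le_univ J₀
    rwa [hJ₀c, Fintype.card_fin] at h
  -- r ≥ 2m - 1
  obtain ⟨A, hAsub, hAcard⟩ := exists_subset_card_eq (s := (univ : Finset (Fin r))) (n := m - 1)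
    (by rw [card_univ, Fintype.card_fin]; omega)
  have hAshort : ¬ IsLong ℓ A := by
    intro h
    have := mu_le_card hpos h
    rw [hAcard] at this
    omega
  have hAc : IsLong ℓ Aᶜ := (long_compl_iff hg A).mpr hAshort
  have h2m : 2 * m ≤ r + 1 := by
    have h := mu_le_card hpos hAc
    rw [card_compl, hAcard, Fintype.card_fin] at h
    omega
  set T : Finset (Fin r) := univ.filter (fun j : Fin r => r + 1 ≤ (j : ℕ) + 2 * m) with hT
  have hTcard : T.card = 2 * m - 1 := by
    have hpiv : r + 1 - 2 * m < r := by omega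
    have he : T = Ici (⟨r + 1 - 2 * m, hpiv⟩ : Fin r) := by
      ext x
      simp only [hT, mem_filter, mem_univ, true_and, mem_Ici, Fin.le_def, Fin.val_mk]
      omega
    rw [he, Fin.card_Ici]
    simp only [Fin.val_mk]
    omega
  have key2 : ∀ K : Finset (Fin r),
      m ≤ (K.filter (fun j : Fin r => r + 1 ≤ (j : ℕ) + 2 * m)).card → IsLong ℓ K := by
    intro K h
    obtain ⟨S, hSsub, hScard⟩ :=
      exists_subset_card_eq (s := K.filter (fun j : Fin r => r + 1 ≤ (j : ℕ) + 2 * m)) (n := m) h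
    have hmemS : ∀ j ∈ S, r + 1 ≤ (j : ℕ) + 2 * m := fun j hj =>
      (mem_filter.mp (hSsub hj)).2
    exact long_mono hpos (hSsub.trans (filter_subset _ _)) (hkey S hmemS hScard)
  intro J
  constructor
  · intro hJl
    by_contra hlt
    push_neg at hlt
    have hsplit : #(T.filter (fun x => x ∈ J)) + #(T.filter (fun x => x ∉ J)) = #T := by
      simpa using card_filter_add_card_filter_not (s := T) (p := (· ∈ J))
    have e1 : J.filter (fun j : Fin r => r + 1 ≤ (j : ℕ) + 2 * m) = T.filter (· ∈ J) := by
      ext x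
      simp only [hT, mem_filter, mem_univ, true_and]
      tauto
    have e2 : Jᶜ.filter (fun j : Fin r => r + 1 ≤ (j : ℕ) + 2 * m)
        = T.filter (fun x => x ∉ J) := by
      ext x
      simp only [hT, mem_filter, mem_univ, true_and, mem_compl]
      tauto
    have hge : m ≤ (Jᶜ.filter (fun j : Fin r => r + 1 ≤ (j : ℕ) + 2 * m)).card := by
      rw [e2]
      rw [e1] at hlt
      omega
    have hJc := key2 Jᶜ hge
    unfold IsLong at hJl hJc
    rw [compl_compl] at hJc
    linarith
  · exact key2 J
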